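/- Let U ⊆ ℝⁿ be open, let g₁, g₂ : U → (ℝⁿ →ₗ ℝⁿ →ₗ ℝ) be two smooth maps with each g₁(q) and each g₂(q) a symmetric nondegenerate bilinear form, with Christoffel symbols Γ₁ and Γ₂ and kinetic energies T₁(q,v) = (1/2) g₁(q)(v,v), T₂(q,v) = (1/2) g₂(q)(v,v) respectively, and let α : U × ℝⁿ → (ℝⁿ)* be a horizontal 1-form. Let D₁ and D₂ be the Newton fields of the mechanical systems (U, g₁, α) and (U, g₂, α), i.e. Dₐ(q,v) = (v, fₐ(q,v)) with fₐˡ(q,v) = −( Σ_k gₐ^{lk}(q) α_k(q,v) + Σ_{i,j} (Γₐ)ˡ_{ij}(q) vⁱ vʲ ) for a = 1, 2. Then D₁ T₁ = 0 everywhere on U × ℝⁿ if and only if D₂ T₂ = 0 everywhere on U × ℝⁿ; both are equivalent to α(q,v)(v) = 0 for all (q,v). Thus the work forms corresponding to relativistic fields are the same independently of the metric: they are the contact forms. -/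

import Mathlib

/-- The `i`-th standard basis vector of `ℝⁿ`. -/
noncomputable def basisVec {n : ℕ} (i : Fin n) : Fin n → ℝ := Pi.single i 1

/-- The Christoffel symbols `Γˡ_{ij}(q) = (1/2) Σ_k g^{lk}(q) (∂_i g_{jk} + ∂_j g_{ik} − ∂_k g_{ij})(q)`
of a metric `g` with inverse coefficients `ginv`. -/
noncomputable def christoffel {n : ℕ}
    (g : (Fin n → ℝ) → ((Fin n → ℝ) →L[ℝ] (Fin n → ℝ) →L[ℝ] ℝ))
    (ginv : (Fin n → ℝ) → Fin n → Fin n → ℝ)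
    (l i j : Fin n) (q : Fin n → ℝ) : ℝ :=
  (1/2) * ∑ k, ginv q l k *
    (fderiv ℝ (fun p => g p (basisVec j) (basisVec k)) q (basisVec i)
      + fderiv ℝ (fun p => g p (basisVec i) (basisVec k)) q (basisVec j)
      - fderiv ℝ (fun p => g p (basisVec i) (basisVec j)) q (basisVec k))

/-- The kinetic energy `T(q,v) = (1/2) g(q)(v,v)` on `U × ℝⁿ`. -/
noncomputable def kineticEnergy {n : ℕ}
    (g : (Fin n → ℝ) → ((Fin n → ℝ) →L[ℝ] (Fin n → ℝ) →L[ℝ] ℝ)) :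
    (Fin n → ℝ) × (Fin n → ℝ) → ℝ :=
  fun p => (1/2) * g p.1 p.2 p.2

lemma basisVec_expand {n : ℕ} (v : Fin n → ℝ) : v = ∑ i, v i • basisVec i := by
  simp only [basisVec]
  ext j
  simp [Finset.sum_apply, Pi.single_apply]

lemma clm_expand {n : ℕ} (L : (Fin n → ℝ) →L[ℝ] ℝ) (v : Fin n → ℝ) :
    L v = ∑ i, v i * L (basisVec i) := by
  conv_lhs => rw [basisVec_expand v]
  simp [smul_eq_mul]

lemma bilin_expand {n : ℕ} (B : (Fin n → ℝ) →L[ℝ] (Fin n → ℝ) →L[ℝ] ℝ) (u w : Fin n → ℝ) :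
    B u w = ∑ m, ∑ l, u m * w l * B (basisVec m) (basisVec l) := by
  conv_lhs => rw [basisVec_expand u]
  rw [map_sum, ContinuousLinearMap.sum_apply]
  refine Finset.sum_congr rfl fun m _ => ?_
  simp only [map_smul, ContinuousLinearMap.smul_apply, smul_eq_mul]
  rw [clm_expand (B (basisVec m)) w, Finset.mul_sum]
  exact Finset.sum_congr rfl fun l _ => by ring

lemma sum3_comm {n : ℕ} (F : Fin n → Fin n → Fin n → ℝ) :
    ∑ m, ∑ i, ∑ j, F m i j = ∑ i, ∑ j, ∑ m, F m i j := by
  rw [Finset.sum_comm]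
  exact Finset.sum_congr rfl fun i _ => Finset.sum_comm

lemma trilin_expand {n : ℕ} (D : (Fin n → ℝ) →L[ℝ] (Fin n → ℝ) →L[ℝ] (Fin n → ℝ) →L[ℝ] ℝ)
    (v : Fin n → ℝ) :
    D v v v = ∑ i, ∑ j, ∑ k, v i * v j * v k * D (basisVec i) (basisVec j) (basisVec k) := by
  have h1 : ∀ m l : Fin n, D v (basisVec m) (basisVec l)
      = ∑ i, v i * D (basisVec i) (basisVec m) (basisVec l) := by
    intro m l
    conv_lhs => rw [basisVec_expand v]
    rw [map_sum, ContinuousLinearMap.sum_apply, ContinuousLinearMap.sum_apply]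
    exact Finset.sum_congr rfl fun i _ => by
      simp [smul_eq_mul]
  rw [bilin_expand (D v) v v]
  rw [Finset.sum_congr rfl fun m _ => Finset.sum_congr rfl fun l _ => by rw [h1 m l]]
  have h2 : (∑ m, ∑ l, ∑ i, v i * v m * v l * D (basisVec i) (basisVec m) (basisVec l))
      = ∑ i, ∑ j, ∑ k, v i * v j * v k * D (basisVec i) (basisVec j) (basisVec k) := by
    rw [sum3_comm, sum3_comm]
  rw [← h2]
  refine Finset.sum_congr rfl fun m _ => Finset.sum_congr rfl fun l _ => ?_
  rw [Finset.mul_sum]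
  exact Finset.sum_congr rfl fun i _ => by ring

lemma fderiv_coeff {n : ℕ} (g : (Fin n → ℝ) → ((Fin n → ℝ) →L[ℝ] (Fin n → ℝ) →L[ℝ] ℝ))
    (q : Fin n → ℝ) (hdg : DifferentiableAt ℝ g q) (i j k : Fin n) :
    fderiv ℝ (fun p => g p (basisVec j) (basisVec k)) q (basisVec i)
      = fderiv ℝ g q (basisVec i) (basisVec j) (basisVec k) := by
  set A : ((Fin n → ℝ) →L[ℝ] (Fin n → ℝ) →L[ℝ] ℝ) →L[ℝ] ℝ :=
    (ContinuousLinearMap.apply ℝ ℝ (basisVec k)).comp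
      (ContinuousLinearMap.apply ℝ ((Fin n → ℝ) →L[ℝ] ℝ) (basisVec j)) with hA
  have h1 : HasFDerivAt (fun p => A (g p)) (A.comp (fderiv ℝ g q)) q :=
    by
      have h := (hdg.hasFDerivAt.clm_apply (hasFDerivAt_const (basisVec j) q)).clm_apply
        (hasFDerivAt_const (basisVec k) q)
      convert h using 1 <;> ext <;> simp [hA]
  have h2 : (fun p => A (g p)) = fun p => g p (basisVec j) (basisVec k) := by
    ext p; simp [hA]
  rw [← h2, h1.fderiv]
  simp [hA]

open ContinuousLinearMap in
lemma fderiv_kinetic {n : ℕ} (g : (Fin n → ℝ) → ((Fin n → ℝ) →L[ℝ] (Fin n → ℝ) →L[ℝ] ℝ))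
    (q v w : Fin n → ℝ) (hdg : DifferentiableAt ℝ g q) :
    fderiv ℝ (kineticEnergy g) (q, v) (v, w)
      = (1/2) * (fderiv ℝ g q v v v + g q w v + g q v w) := by
  set dg := fderiv ℝ g q with hdgdef
  have hc1 : HasFDerivAt (fun p : (Fin n → ℝ) × (Fin n → ℝ) => g p.1)
      (dg.comp (fst ℝ _ _)) (q, v) :=
    by
      have := HasFDerivAt.comp (E := (Fin n → ℝ) × (Fin n → ℝ)) (F := Fin n → ℝ)
        (G := (Fin n → ℝ) →L[ℝ] (Fin n → ℝ) →L[ℝ] ℝ) (q, v) (g := g) (g' := dg)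
        (f := Prod.fst) (f' := fst ℝ _ _) (by convert hdg.hasFDerivAt) (by convert hasFDerivAt_fst)
      convert this <;> rfl
  have hu : HasFDerivAt (fun p : (Fin n → ℝ) × (Fin n → ℝ) => p.2)
      (snd ℝ _ _) (q, v) := hasFDerivAt_snd
  have hc4 := ((hc1.clm_apply hu).clm_apply hu).const_mul (1/2 : ℝ)
  have hk : kineticEnergy g = fun p : (Fin n → ℝ) × (Fin n → ℝ) => (1/2) * g p.1 p.2 p.2 := rfl
  rw [hk, hc4.fderiv]
  simp
  ring

set_option maxHeartbeats 1000000 in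
lemma key {n : ℕ} (U : Set (Fin n → ℝ)) (hU : IsOpen U)
    (g : (Fin n → ℝ) → ((Fin n → ℝ) →L[ℝ] (Fin n → ℝ) →L[ℝ] ℝ))
    (hg : ContDiffOn ℝ (⊤ : ℕ∞) g U)
    (hsymm : ∀ q ∈ U, ∀ u w : Fin n → ℝ, g q u w = g q w u)
    (ginv : (Fin n → ℝ) → Fin n → Fin n → ℝ)
    (hginv : ∀ q ∈ U, ∀ i j : Fin n,
      (∑ k, g q (basisVec i) (basisVec k) * ginv q k j) = if i = j then 1 else 0)
    (α : (Fin n → ℝ) × (Fin n → ℝ) → ((Fin n → ℝ) →L[ℝ] ℝ))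
    (f : (Fin n → ℝ) × (Fin n → ℝ) → (Fin n → ℝ))
    (hf : ∀ q ∈ U, ∀ (v : Fin n → ℝ) (l : Fin n),
      f (q, v) l = -((∑ k, ginv q l k * α (q, v) (basisVec k))
        + ∑ i, ∑ j, christoffel g ginv l i j q * v i * v j))
    (q : Fin n → ℝ) (hq : q ∈ U) (v : Fin n → ℝ) :
    fderiv ℝ (kineticEnergy g) (q, v) (v, f (q, v)) = -(α (q, v) v) := by
  classical
  have hdg : DifferentiableAt ℝ g q :=
    (hg.contDiffAt (hU.mem_nhds hq)).differentiableAt (by simp)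
  set dg := fderiv ℝ g q with hdgdef
  set fv := f (q, v) with hfv
  have hD : ∀ i j k : Fin n,
      fderiv ℝ (fun p => g p (basisVec j) (basisVec k)) q (basisVec i)
        = dg (basisVec i) (basisVec j) (basisVec k) := fun i j k =>
    fderiv_coeff g q hdg i j k
  have hcontr : ∀ m k : Fin n,
      (∑ l, g q (basisVec m) (basisVec l) * ginv q l k) = if m = k then 1 else 0 :=
    fun m k => hginv q hq m k
  -- contraction of the metric with Christoffel symbols
  have hB : ∀ m i j : Fin n, (∑ l, g q (basisVec m) (basisVec l) * christoffel g ginv l i j q)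
      = (1/2) * (dg (basisVec i) (basisVec j) (basisVec m)
          + dg (basisVec j) (basisVec i) (basisVec m)
          - dg (basisVec m) (basisVec i) (basisVec j)) := by
    intro m i j
    simp only [christoffel, hD]
    have step : (∑ l, g q (basisVec m) (basisVec l) * ((1/2) * ∑ k, ginv q l k *
          (dg (basisVec i) (basisVec j) (basisVec k) + dg (basisVec j) (basisVec i) (basisVec k)
            - dg (basisVec k) (basisVec i) (basisVec j))))
        = ∑ k, (∑ l, g q (basisVec m) (basisVec l) * ginv q l k) * ((1/2) *
          (dg (basisVec i) (basisVec j) (basisVec k) + dg (basisVec j) (basisVec i) (basisVec k)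
            - dg (basisVec k) (basisVec i) (basisVec j))) := by
      simp only [Finset.mul_sum, Finset.sum_mul]
      rw [Finset.sum_comm]
      exact Finset.sum_congr rfl fun l _ => Finset.sum_congr rfl fun k _ => by ring
    rw [step, Finset.sum_congr rfl fun k _ => by rw [hcontr m k]]
    simp
  -- the main scalar identity
  have hm : ∀ m : Fin n, (∑ l, v m * fv l * g q (basisVec m) (basisVec l))
      = -(v m * α (q, v) (basisVec m))
        - ∑ i, ∑ j, v m * v i * v j * ((1/2) * (dg (basisVec i) (basisVec j) (basisVec m)
            + dg (basisVec j) (basisVec i) (basisVec m)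
            - dg (basisVec m) (basisVec i) (basisVec j))) := by
    intro m
    have hfl : ∀ l, fv l = -((∑ k, ginv q l k * α (q, v) (basisVec k))
        + ∑ i, ∑ j, christoffel g ginv l i j q * v i * v j) := fun l => hf q hq v l
    have e1 : (∑ l, g q (basisVec m) (basisVec l) * (∑ k, ginv q l k * α (q, v) (basisVec k)))
        = α (q, v) (basisVec m) := by
      have : (∑ l, g q (basisVec m) (basisVec l) * (∑ k, ginv q l k * α (q, v) (basisVec k)))
          = ∑ k, (∑ l, g q (basisVec m) (basisVec l) * ginv q l k) * α (q, v) (basisVec k) := by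
        simp only [Finset.mul_sum, Finset.sum_mul]
        rw [Finset.sum_comm]
        exact Finset.sum_congr rfl fun l _ => Finset.sum_congr rfl fun k _ => by ring
      rw [this, Finset.sum_congr rfl fun k _ => by rw [hcontr m k]]
      simp
    have e2 : (∑ l, g q (basisVec m) (basisVec l)
          * (∑ i, ∑ j, christoffel g ginv l i j q * v i * v j))
        = ∑ i, ∑ j, (∑ l, g q (basisVec m) (basisVec l) * christoffel g ginv l i j q)
            * (v i * v j) := by
      simp only [Finset.mul_sum, Finset.sum_mul]
      rw [sum3_comm]
      exact Finset.sum_congr rfl fun i _ => Finset.sum_congr rfl fun j _ =>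
        Finset.sum_congr rfl fun l _ => by ring
    calc (∑ l, v m * fv l * g q (basisVec m) (basisVec l))
        = -(v m * (∑ l, g q (basisVec m) (basisVec l)
              * (∑ k, ginv q l k * α (q, v) (basisVec k))))
          - v m * (∑ l, g q (basisVec m) (basisVec l)
              * (∑ i, ∑ j, christoffel g ginv l i j q * v i * v j)) := by
          rw [Finset.mul_sum, Finset.mul_sum, ← Finset.sum_neg_distrib,
            ← Finset.sum_sub_distrib]
          refine Finset.sum_congr rfl fun l _ => ?_
          rw [hfl l]; ring
      _ = -(v m * α (q, v) (basisVec m))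
          - ∑ i, ∑ j, v m * v i * v j * ((1/2) * (dg (basisVec i) (basisVec j) (basisVec m)
              + dg (basisVec j) (basisVec i) (basisVec m)
              - dg (basisVec m) (basisVec i) (basisVec j))) := by
          rw [e1, e2]
          congr 1
          rw [Finset.mul_sum]
          refine Finset.sum_congr rfl fun i _ => ?_
          rw [Finset.mul_sum]
          refine Finset.sum_congr rfl fun j _ => ?_
          rw [hB m i j]; ring
  have hmain : g q v fv = -(α (q, v) v) - (1/2) * dg v v v := by
    rw [bilin_expand (g q) v fv]
    rw [Finset.sum_congr rfl fun m _ => hm m]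
    rw [Finset.sum_sub_distrib, Finset.sum_neg_distrib]
    have h1 : (∑ m, v m * α (q, v) (basisVec m)) = α (q, v) v := (clm_expand (α (q, v)) v).symm
    have collapse : ∀ F : Fin n → Fin n → Fin n → ℝ,
        (∑ m, ∑ i, ∑ j, F m i j) = ∑ p : Fin n × Fin n × Fin n, F p.1 p.2.1 p.2.2 := by
      intro F
      rw [Fintype.sum_prod_type]
      refine Finset.sum_congr rfl fun m _ => ?_
      rw [Fintype.sum_prod_type]
    set W : Fin n × Fin n × Fin n → ℝ := fun p =>
      v p.1 * v p.2.1 * v p.2.2 * dg (basisVec p.1) (basisVec p.2.1) (basisVec p.2.2) with hW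
    have hT : dg v v v = ∑ p : Fin n × Fin n × Fin n, W p := by
      rw [trilin_expand dg v, collapse]
    have hF1 : (∑ p : Fin n × Fin n × Fin n,
          v p.1 * v p.2.1 * v p.2.2 * dg (basisVec p.2.1) (basisVec p.2.2) (basisVec p.1))
        = ∑ p, W p := by
      rw [← Equiv.sum_comp
        (⟨fun p => (p.2.1, p.2.2, p.1), fun p => (p.2.2, p.1, p.2.1),
          fun p => rfl, fun p => rfl⟩ :
          (Fin n × Fin n × Fin n) ≃ (Fin n × Fin n × Fin n)) W]
      refine Finset.sum_congr rfl fun p _ => ?_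
      simp only [hW, Equiv.coe_fn_mk]
      ring
    have hF2 : (∑ p : Fin n × Fin n × Fin n,
          v p.1 * v p.2.1 * v p.2.2 * dg (basisVec p.2.2) (basisVec p.2.1) (basisVec p.1))
        = ∑ p, W p := by
      rw [← Equiv.sum_comp
        (⟨fun p => (p.2.2, p.2.1, p.1), fun p => (p.2.2, p.2.1, p.1),
          fun p => rfl, fun p => rfl⟩ :
          (Fin n × Fin n × Fin n) ≃ (Fin n × Fin n × Fin n)) W]
      refine Finset.sum_congr rfl fun p _ => ?_
      simp only [hW, Equiv.coe_fn_mk]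
      ring
    have h2 : (∑ m, ∑ i, ∑ j, v m * v i * v j
          * ((1/2) * (dg (basisVec i) (basisVec j) (basisVec m)
            + dg (basisVec j) (basisVec i) (basisVec m)
            - dg (basisVec m) (basisVec i) (basisVec j))))
        = (1/2) * dg v v v := by
      rw [collapse]
      calc (∑ p : Fin n × Fin n × Fin n, v p.1 * v p.2.1 * v p.2.2
            * ((1/2) * (dg (basisVec p.2.1) (basisVec p.2.2) (basisVec p.1)
              + dg (basisVec p.2.2) (basisVec p.2.1) (basisVec p.1)
              - dg (basisVec p.1) (basisVec p.2.1) (basisVec p.2.2))))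
          = ∑ p : Fin n × Fin n × Fin n,
              ((1/2) * (v p.1 * v p.2.1 * v p.2.2
                  * dg (basisVec p.2.1) (basisVec p.2.2) (basisVec p.1))
                + (1/2) * (v p.1 * v p.2.1 * v p.2.2
                  * dg (basisVec p.2.2) (basisVec p.2.1) (basisVec p.1))
                - (1/2) * (v p.1 * v p.2.1 * v p.2.2
                  * dg (basisVec p.1) (basisVec p.2.1) (basisVec p.2.2))) :=
            Finset.sum_congr rfl fun p _ => by ring
        _ = (1/2) * dg v v v := by
            rw [Finset.sum_sub_distrib, Finset.sum_add_distrib, ← Finset.mul_sum,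
              ← Finset.mul_sum, ← Finset.mul_sum, hF1, hF2]
            have hw : (∑ p : Fin n × Fin n × Fin n, v p.1 * v p.2.1 * v p.2.2
                * dg (basisVec p.1) (basisVec p.2.1) (basisVec p.2.2)) = ∑ p, W p :=
              Finset.sum_congr rfl fun p _ => rfl
            rw [hw, ← hT]
            ring
    rw [h1, h2]
  have hsym2 : g q fv v = g q v fv := hsymm q hq fv v
  rw [fderiv_kinetic g q v fv hdg, ← hdgdef, hsym2, hmain]
  ring

/-- Let `g₁`, `g₂` be two metrics on `U` with Newton fields `D₁`, `D₂`
of the mechanical systems `(U, g₁, α)` and `(U, g₂, α)`. Then `D₁ T₁ = 0` everywhere iff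
`D₂ T₂ = 0` everywhere; both are equivalent to `α` being a contact form. The work forms
of relativistic fields are thus the same independently of the metric. -/
theorem relativistic_work_forms_independent_of_metric {n : ℕ}
    (U : Set (Fin n → ℝ)) (hU : IsOpen U)
    (g₁ g₂ : (Fin n → ℝ) → ((Fin n → ℝ) →L[ℝ] (Fin n → ℝ) →L[ℝ] ℝ))
    (hg₁ : ContDiffOn ℝ (⊤ : ℕ∞) g₁ U)
    (hg₂ : ContDiffOn ℝ (⊤ : ℕ∞) g₂ U)
    (hsymm₁ : ∀ q ∈ U, ∀ u w : Fin n → ℝ, g₁ q u w = g₁ q w u)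
    (hsymm₂ : ∀ q ∈ U, ∀ u w : Fin n → ℝ, g₂ q u w = g₂ q w u)
    (hnondeg₁ : ∀ q ∈ U, ∀ u : Fin n → ℝ, (∀ w, g₁ q u w = 0) → u = 0)
    (hnondeg₂ : ∀ q ∈ U, ∀ u : Fin n → ℝ, (∀ w, g₂ q u w = 0) → u = 0)
    (ginv₁ ginv₂ : (Fin n → ℝ) → Fin n → Fin n → ℝ)
    (hginv₁ : ∀ q ∈ U, ∀ i j : Fin n,
      (∑ k, g₁ q (basisVec i) (basisVec k) * ginv₁ q k j) = if i = j then 1 else 0)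
    (hginv₂ : ∀ q ∈ U, ∀ i j : Fin n,
      (∑ k, g₂ q (basisVec i) (basisVec k) * ginv₂ q k j) = if i = j then 1 else 0)
    (α : (Fin n → ℝ) × (Fin n → ℝ) → ((Fin n → ℝ) →L[ℝ] ℝ))
    (f₁ f₂ : (Fin n → ℝ) × (Fin n → ℝ) → (Fin n → ℝ))
    (hf₁ : ∀ q ∈ U, ∀ (v : Fin n → ℝ) (l : Fin n),
      f₁ (q, v) l = -((∑ k, ginv₁ q l k * α (q, v) (basisVec k))
        + ∑ i, ∑ j, christoffel g₁ ginv₁ l i j q * v i * v j))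
    (hf₂ : ∀ q ∈ U, ∀ (v : Fin n → ℝ) (l : Fin n),
      f₂ (q, v) l = -((∑ k, ginv₂ q l k * α (q, v) (basisVec k))
        + ∑ i, ∑ j, christoffel g₂ ginv₂ l i j q * v i * v j)) :
    ((∀ q ∈ U, ∀ v : Fin n → ℝ,
        fderiv ℝ (kineticEnergy g₁) (q, v) (v, f₁ (q, v)) = 0)
      ↔ (∀ q ∈ U, ∀ v : Fin n → ℝ,
        fderiv ℝ (kineticEnergy g₂) (q, v) (v, f₂ (q, v)) = 0))
    ∧
    ((∀ q ∈ U, ∀ v : Fin n → ℝ,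
        fderiv ℝ (kineticEnergy g₁) (q, v) (v, f₁ (q, v)) = 0)
      ↔ (∀ q ∈ U, ∀ v : Fin n → ℝ, α (q, v) v = 0))
    ∧
    ((∀ q ∈ U, ∀ v : Fin n → ℝ,
        fderiv ℝ (kineticEnergy g₂) (q, v) (v, f₂ (q, v)) = 0)
      ↔ (∀ q ∈ U, ∀ v : Fin n → ℝ, α (q, v) v = 0)) := by
  have k1 := key U hU g₁ hg₁ hsymm₁ ginv₁ hginv₁ α f₁ hf₁
  have k2 := key U hU g₂ hg₂ hsymm₂ ginv₂ hginv₂ α f₂ hf₂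
  have e1 : (∀ q ∈ U, ∀ v : Fin n → ℝ,
      fderiv ℝ (kineticEnergy g₁) (q, v) (v, f₁ (q, v)) = 0)
      ↔ (∀ q ∈ U, ∀ v : Fin n → ℝ, α (q, v) v = 0) := by
    constructor
    · intro h q hq v
      have := h q hq v
      rw [k1 q hq v] at this
      linarith
    · intro h q hq v
      rw [k1 q hq v, h q hq v, neg_zero]
  have e2 : (∀ q ∈ U, ∀ v : Fin n → ℝ,
      fderiv ℝ (kineticEnergy g₂) (q, v) (v, f₂ (q, v)) = 0)
      ↔ (∀ q ∈ U, ∀ v : Fin n → ℝ, α (q, v) v = 0) := by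
    constructor
    · intro h q hq v
      have := h q hq v
      rw [k2 q hq v] at this
      linarith
    · intro h q hq v
      rw [k2 q hq v, h q hq v, neg_zero]
  exact ⟨e1.trans e2.symm, e1, e2⟩
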